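/- For nonnegative integers n and indeterminates (rational parameters) a, b, c with the denominators nonzero, the Pfaff–Saalschütz summation holds: ∑_{k=0}^{n} [(-n)_k (a)_k (b)_k] / [(c)_k (1+a+b-c-n)_k k!] = (c-a)_n (c-b)_n / ((c)_n (c-a-b)_n), where (x)_k denotes the rising factorial (Pochhammer symbol). -/
import Mathlib

/-- The Pochhammer symbol (rising factorial) `(x)_n = x(x+1)⋯(x+n-1)`. -/
def poch (x : ℚ) (n : ℕ) : ℚ := ∏ i ∈ Finset.range n, (x + i)

lemma poch_zero (x : ℚ) : poch x 0 = 1 := by simp [poch]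

lemma poch_succ (x : ℚ) (n : ℕ) : poch x (n+1) = poch x n * (x + n) :=
  Finset.prod_range_succ _ _

lemma poch_succ_left (x : ℚ) (n : ℕ) : poch x (n+1) = x * poch (x+1) n := by
  rw [poch, Finset.prod_range_succ']
  have h : ∀ i ∈ Finset.range n, (x + ((i+1:ℕ):ℚ)) = ((x+1) + (i:ℚ)) :=
    fun i _ => by push_cast; ring
  rw [Finset.prod_congr rfl h,
    show (∏ i ∈ Finset.range n, (x+1+(i:ℚ))) = poch (x+1) n from rfl]
  norm_num [mul_comm]

lemma poch_add (x : ℚ) (m n : ℕ) : poch x (m+n) = poch x m * poch (x+m) n := by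
  rw [poch, Finset.prod_range_add, poch, poch]
  congr 1
  exact Finset.prod_congr rfl fun i _ => by push_cast; ring

lemma poch_reflect (x : ℚ) (k : ℕ) : poch (1 - x - k) k = (-1)^k * poch x k := by
  rw [poch, ← Finset.prod_range_reflect]
  have h : ∀ j ∈ Finset.range k, (1 - x - (k:ℚ) + ((k - 1 - j : ℕ) : ℚ)) = (-1) * (x + j) := by
    intro j hj
    rw [Finset.mem_range] at hj
    have h1 : 1 ≤ k := Nat.one_le_of_lt (Nat.lt_of_le_of_lt (Nat.zero_le j) hj)
    have h2 : j ≤ k - 1 := Nat.le_sub_one_of_lt hj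
    rw [Nat.cast_sub h2, Nat.cast_sub h1]
    push_cast
    ring
  rw [Finset.prod_congr rfl h, Finset.prod_mul_distrib, Finset.prod_const,
    Finset.card_range, poch]

lemma poch_nat (m k : ℕ) :
    poch ((m:ℚ)+1) k * (m.factorial : ℚ) = ((m+k).factorial : ℚ) := by
  induction k with
  | zero => simp [poch_zero]
  | succ k ih =>
      rw [poch_succ, show m + (k+1) = (m+k)+1 by ring, Nat.factorial_succ]
      rw [mul_right_comm, ih]
      push_cast
      ring

lemma choose_poch (n k : ℕ) (h : k ≤ n) :
    poch ((↑(n-k):ℚ)+1) k = (n.choose k : ℚ) * (k.factorial : ℚ) := by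
  have h1 := poch_nat (n-k) k
  rw [Nat.sub_add_cancel h] at h1
  have h2 : (n.choose k * k.factorial * (n-k).factorial : ℕ) = n.factorial :=
    Nat.choose_mul_factorial_mul_factorial h
  have h3 : ((n-k).factorial : ℚ) ≠ 0 := Nat.cast_ne_zero.mpr (Nat.factorial_ne_zero _)
  apply mul_right_cancel₀ h3
  rw [h1, ← h2]
  push_cast
  ring

lemma poch_neg_nat (n k : ℕ) (h : k ≤ n) :
    poch (-(n:ℚ)) k = (-1)^k * (n.choose k : ℚ) * (k.factorial : ℚ) := by
  have h1 := poch_reflect ((↑(n-k):ℚ)+1) k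
  have h2 : (1 : ℚ) - ((↑(n-k):ℚ)+1) - k = -(n:ℚ) := by
    rw [Nat.cast_sub h]; ring
  rw [h2, choose_poch n k h] at h1
  rw [h1]; ring

/-- The key polynomial identity (Pfaff–Saalschütz with denominators cleared). -/
lemma key (a b c : ℚ) (n : ℕ) :
    ∑ k ∈ Finset.range (n+1),
      (n.choose k : ℚ) * poch a k * poch b k * poch (c+k) (n-k) * poch (c-a-b) (n-k)
    = poch (c-a) n * poch (c-b) n := by
  induction n with
  | zero => simp [poch_zero]
  | succ n ih =>
    set G : ℕ → ℚ := fun j =>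
      (j:ℚ) * (((n+1).choose j : ℕ) : ℚ) * poch a j * poch b j *
        poch (c+(j:ℚ)-1) (n+1-j) * poch (c-a-b) (n+1-j) with hG
    have term : ∀ k ∈ Finset.range (n+2),
        ((n:ℚ)+1) * (((n+1).choose k : ℚ) * poch a k * poch b k *
            poch (c+k) (n+1-k) * poch (c-a-b) (n+1-k))
          - ((n:ℚ)+1) * ((c-a+n)*(c-b+n)) * ((n.choose k : ℚ) * poch a k * poch b k *
            poch (c+k) (n-k) * poch (c-a-b) (n-k))
        = G k - G (k+1) := by
      intro k hk
      rw [Finset.mem_range, Nat.lt_succ_iff] at hk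
      simp only [hG]
      rcases Nat.lt_or_ge k (n+1) with hk' | hk'
      · -- k ≤ n
        have hkn : k ≤ n := Nat.lt_succ_iff.mp hk'
        obtain ⟨m, rfl⟩ : ∃ m, n = k + m := ⟨n - k, (Nat.add_sub_cancel' hkn).symm⟩
        have e1 : k + m - k = m := by omega
        have e2 : k + m + 1 - k = m + 1 := by omega
        have e3 : k + m + 1 - (k+1) = m := by omega
        rw [e1, e2, e3]
        rw [poch_succ (c+(k:ℚ)) m, poch_succ (c-a-b) m,
          poch_succ_left (c+(k:ℚ)-1) m,
          show c+(k:ℚ)-1+1 = c+(k:ℚ) by ring,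
          show ((k+1:ℕ):ℚ) = (k:ℚ)+1 by push_cast; ring,
          show c+((k:ℚ)+1)-1 = c+(k:ℚ) by ring,
          poch_succ a k, poch_succ b k]
        have h1 : ((k:ℚ)+1) * (((k+m+1).choose (k+1) : ℕ) : ℚ)
            = ((k:ℚ)+(m:ℚ)+1) * (((k+m).choose k : ℕ) : ℚ) := by
          have h' : (k+m+1) * (k+m).choose k = (k+m+1).choose (k+1) * (k+1) :=
            Nat.add_one_mul_choose_eq (k+m) k
          have hcast := congrArg (Nat.cast (R := ℚ)) h'
          push_cast at hcast
          linarith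
        have h2 : (((k+m).choose k : ℕ) : ℚ) * ((k:ℚ)+(m:ℚ)+1)
            = (((k+m+1).choose k : ℕ) : ℚ) * ((m:ℚ)+1) := by
          have h' : (k+m).choose k * (k+m+1) = (k+m+1).choose k * (m+1) := by
            rw [Nat.choose_mul_succ_eq (k+m) k, show k+m+1-k = m+1 by omega]
          have hcast := congrArg (Nat.cast (R := ℚ)) h'
          push_cast at hcast
          linarith
        push_cast
        linear_combination
          (poch a k * poch b k * poch (c+(k:ℚ)) m * poch (c-a-b) m * (a+k) * (b+k)) * h1
          + (poch a k * poch b k * poch (c+(k:ℚ)) m * poch (c-a-b) m *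
              ((a+k)*(b+k) - (c-a+(k:ℚ)+m)*(c-b+(k:ℚ)+m))) * h2
      · -- k = n+1
        have hk1 : k = n + 1 := le_antisymm hk hk'
        subst hk1
        rw [show n-(n+1) = 0 by omega, show n+1-(n+1) = 0 by omega,
          show n+1-(n+1+1) = 0 by omega]
        simp only [Nat.choose_succ_self, Nat.choose_self, poch_zero,
          Nat.cast_zero, Nat.cast_one, Nat.cast_ofNat]
        push_cast
        ring
    have tele := Finset.sum_congr rfl term
    rw [Finset.sum_sub_distrib, Finset.sum_range_sub' G (n+2)] at tele
    have e0 : G 0 = 0 := by simp [hG]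
    have eN : G (n+2) = 0 := by
      simp only [hG]
      rw [Nat.choose_succ_self]
      push_cast
      ring
    have hF0 : ∑ k ∈ Finset.range (n+2),
        (((n:ℚ)+1) * ((c-a+n)*(c-b+n)) * ((n.choose k : ℚ) * poch a k * poch b k *
            poch (c+k) (n-k) * poch (c-a-b) (n-k)))
        = ((n:ℚ)+1) * ((c-a+n)*(c-b+n)) * (poch (c-a) n * poch (c-b) n) := by
      rw [← Finset.mul_sum, Finset.sum_range_succ, Nat.choose_succ_self]
      simp only [Nat.cast_zero, zero_mul]
      rw [add_zero, ih]
    have hne : ((n:ℚ)+1) ≠ 0 := by positivity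
    have tele2 : ((n:ℚ)+1) * (∑ k ∈ Finset.range (n+2),
          (((n+1).choose k : ℚ) * poch a k * poch b k *
            poch (c+k) (n+1-k) * poch (c-a-b) (n+1-k)))
        = ((n:ℚ)+1) * ((c-a+n)*(c-b+n) * (poch (c-a) n * poch (c-b) n)) := by
      rw [Finset.mul_sum]
      linear_combination tele + hF0 + e0 - eN
    have hmain := mul_left_cancel₀ hne tele2
    rw [hmain, poch_succ, poch_succ]
    ring

theorem pfaff_saalschuetz (n : ℕ) (a b c : ℚ)
    (hc : ∀ k ≤ n, poch c k ≠ 0)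
    (hd : ∀ k ≤ n, poch (1 + a + b - c - (n : ℚ)) k ≠ 0)
    (hcab : poch (c - a - b) n ≠ 0) :
    ∑ k ∈ Finset.range (n + 1),
      (poch (-(n : ℚ)) k * poch a k * poch b k) /
        (poch c k * poch (1 + a + b - c - (n : ℚ)) k * (Nat.factorial k : ℚ))
    = (poch (c - a) n * poch (c - b) n) / (poch c n * poch (c - a - b) n) := by
  have hPn : poch c n ≠ 0 := hc n le_rfl
  have hterm : ∀ k ∈ Finset.range (n+1),
      (poch (-(n : ℚ)) k * poch a k * poch b k) /
        (poch c k * poch (1 + a + b - c - (n : ℚ)) k * (Nat.factorial k : ℚ))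
      = ((n.choose k : ℚ) * poch a k * poch b k * poch (c+k) (n-k) * poch (c-a-b) (n-k))
          / (poch c n * poch (c-a-b) n) := by
    intro k hk
    rw [Finset.mem_range, Nat.lt_succ_iff] at hk
    have hsplitC : poch c n = poch c k * poch (c+k) (n-k) := by
      conv_lhs => rw [← Nat.add_sub_cancel' hk]
      exact poch_add c k (n-k)
    have hsplitD : poch (c-a-b) n = poch (c-a-b) (n-k) * poch (c-a-b+(↑(n-k):ℚ)) k := by
      conv_lhs => rw [← Nat.sub_add_cancel hk]
      exact poch_add _ (n-k) k
    have hrefl : poch (1+a+b-c-(n:ℚ)) k = (-1)^k * poch (c-a-b+(↑(n-k):ℚ)) k := by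
      have h := poch_reflect (c-a-b+(↑(n-k):ℚ)) k
      rw [show (1:ℚ) - (c-a-b+(↑(n-k):ℚ)) - (k:ℚ) = 1+a+b-c-(n:ℚ) by
        rw [Nat.cast_sub hk]; ring] at h
      exact h
    have hneg := poch_neg_nat n k hk
    have h1 : poch c k ≠ 0 := hc k hk
    have h2 : poch (c-a-b+(↑(n-k):ℚ)) k ≠ 0 := by
      intro h
      exact hd k hk (by rw [hrefl, h, mul_zero])
    have h3 : (k.factorial : ℚ) ≠ 0 := Nat.cast_ne_zero.mpr (Nat.factorial_ne_zero _)
    have h4 : poch (c+k) (n-k) ≠ 0 := by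
      intro h; exact hPn (by rw [hsplitC, h, mul_zero])
    have h5 : poch (c-a-b) (n-k) ≠ 0 := by
      intro h; exact hcab (by rw [hsplitD, h, zero_mul])
    rw [hneg, hrefl, hsplitC, hsplitD]
    rw [div_eq_div_iff (by
        exact mul_ne_zero (mul_ne_zero h1 (by
          exact mul_ne_zero (pow_ne_zero _ (by norm_num)) h2)) h3)
      (mul_ne_zero (mul_ne_zero h1 h4) (mul_ne_zero h5 h2))]
    ring
  rw [Finset.sum_congr rfl hterm, ← Finset.sum_div, key]
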